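/- Let a > 0 and let φ : [0,a] → ℝ be a concave, continuous, strictly increasing function with φ(0) = 0 and φ(a) = 1 which is not linear. Let h : [0,a] → ℝ be measurable with |h(t)| ≤ 1 for a.e. t, h not equal to 0 a.e., and suppose ‖1 + h‖_{Λ(φ)} = ‖1 − h‖_{Λ(φ)} = 1. Then 0 < m({t ∈ [0,a] : h(t) > 0}) < a and 0 < m({t ∈ [0,a] : h(t) < 0}) < a. -/

import Mathlib

open MeasureTheory Set Filter Topology
open scoped ENNReal NNReal Classical

noncomputable section

/-- The distribution function `m {s ∈ [0,a] : τ < ‖f s‖}` of `f` on `[0,a]`. -/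
def distrib {E : Type*} [NormedAddCommGroup E] (a : ℝ) (f : ℝ → E) (τ : ℝ) : ℝ≥0∞ :=
  volume {s ∈ Set.Icc (0:ℝ) a | τ < ‖f s‖}

/-- The decreasing rearrangement `f*` of `f` on `[0,a]`:
`f*(t) = inf {τ ≥ 0 : m {s ∈ [0,a] : ‖f s‖ > τ} ≤ t}`. -/
def rearr {E : Type*} [NormedAddCommGroup E] (a : ℝ) (f : ℝ → E) (t : ℝ) : ℝ :=
  sInf {τ : ℝ | 0 ≤ τ ∧ distrib a f τ ≤ ENNReal.ofReal t}

/-- The clamp of `t : ℝ` to the interval `[0,a]`. -/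
def clampIcc (a t : ℝ) : ℝ := min (max t 0) a

lemma clampIcc_mem (a t : ℝ) (ha : 0 ≤ a) : clampIcc a t ∈ Set.Icc (0:ℝ) a :=
  ⟨le_min (le_max_right t 0) ha, min_le_right _ _⟩

lemma clampIcc_mono (a : ℝ) : Monotone (clampIcc a) := fun _ _ hst =>
  min_le_min (max_le_max hst le_rfl) le_rfl

lemma clampIcc_continuous (a : ℝ) : Continuous (clampIcc a) :=
  (continuous_id.max continuous_const).min continuous_const

/-- The Stieltjes integrator associated with an increasing continuous function `φ` on `[0,a]`
(extended to all of `ℝ` as a constant outside `[0,a]`).  Its Lebesgue–Stieltjes measure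
realizes the integrals `∫₀^a ⋯ dφ(t)`. -/
def stieltjesOfOn (φ : ℝ → ℝ) (a : ℝ) : StieltjesFunction ℝ :=
  if h : 0 ≤ a ∧ MonotoneOn φ (Set.Icc 0 a) ∧ ContinuousOn φ (Set.Icc 0 a) then
    { toFun := fun t => φ (clampIcc a t)
      mono' := fun s t hst =>
        h.2.1 (clampIcc_mem a s h.1) (clampIcc_mem a t h.1) (clampIcc_mono a hst)
      right_continuous' := fun t =>
        ((h.2.2.comp_continuous (clampIcc_continuous a)
          (fun x => clampIcc_mem a x h.1)).continuousAt).continuousWithinAt }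
  else StieltjesFunction.id

/-- The Lorentz space functional `‖f‖_{Λ(φ)} = ∫₀^a f*(t) dφ(t)` (with values in `ℝ≥0∞`). -/
def eLorentzNorm {E : Type*} [NormedAddCommGroup E] (φ : ℝ → ℝ) (a : ℝ) (f : ℝ → E) : ℝ≥0∞ :=
  ∫⁻ t in Set.Ioc (0:ℝ) a, ENNReal.ofReal (rearr a f t) ∂(stieltjesOfOn φ a).measure

/-- Membership in the Lorentz space `Λ(φ)[0,a]`. -/
def MemLorentz {E : Type*} [NormedAddCommGroup E] [MeasurableSpace E]
    (φ : ℝ → ℝ) (a : ℝ) (f : ℝ → E) : Prop :=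
  Measurable f ∧ eLorentzNorm φ a f < ⊤

/-- The Hardy–Lorentz space functional
`‖f‖_{H(Λ(φ))} = sup_{0 ≤ r < 1} ‖t ↦ f (r e^{it})‖_{Λ(φ)}` for functions on the unit disk. -/
def eHLNorm (φ : ℝ → ℝ) (f : ℂ → ℂ) : ℝ≥0∞ :=
  ⨆ r ∈ Set.Ico (0:ℝ) 1,
    eLorentzNorm φ (2 * Real.pi)
      (fun t : ℝ => f (Complex.ofReal r * Complex.exp (Complex.I * Complex.ofReal t)))

/-- The classical `H¹` functional `‖f‖_{H¹} = sup_{0 ≤ r < 1} (1/(2π)) ∫₀^{2π} |f(r e^{it})| dt`. -/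
def eH1Norm (f : ℂ → ℂ) : ℝ≥0∞ :=
  ⨆ r ∈ Set.Ico (0:ℝ) 1,
    (ENNReal.ofReal (2 * Real.pi))⁻¹ *
      ∫⁻ t in Set.Ioc (0:ℝ) (2 * Real.pi),
        ENNReal.ofReal ‖f (Complex.ofReal r * Complex.exp (Complex.I * Complex.ofReal t))‖

/-- `fb` is the boundary (radial limit) function of `f`: for a.e. `t ∈ [0,2π]`,
`f(r e^{it}) → fb t` as `r → 1⁻`.  (For `f ∈ H¹` such a function exists and coincides a.e.
with the nontangential limit `f̃`.) -/
def HasRadialLimits (f : ℂ → ℂ) (fb : ℝ → ℂ) : Prop :=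
  ∀ᵐ t ∂(volume.restrict (Set.Icc (0:ℝ) (2 * Real.pi))),
    Filter.Tendsto (fun r : ℝ => f (Complex.ofReal r * Complex.exp (Complex.I * Complex.ofReal t)))
      (nhdsWithin 1 (Set.Iio 1)) (nhds (fb t))

/-- `f` (with boundary function `fb`) is an outer function:
`f` is non-null and `ln |f 0| = (1/(2π)) ∫₀^{2π} ln |fb s| ds`. -/
def IsOuter (f : ℂ → ℂ) (fb : ℝ → ℂ) : Prop :=
  (∃ z ∈ Metric.ball (0:ℂ) 1, f z ≠ 0) ∧
    Real.log ‖f 0‖ =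
      (1 / (2 * Real.pi)) * ∫ s in Set.Ioc (0:ℝ) (2 * Real.pi), Real.log ‖fb s‖

lemma distrib_antitone (a : ℝ) (f : ℝ → ℝ) : Antitone (distrib a f) := by
  intro τ σ hτσ
  exact measure_mono fun s hs => ⟨hs.1, lt_of_le_of_lt hτσ hs.2⟩

lemma distrib_exists_gt (a : ℝ) (f : ℝ → ℝ) (τ : ℝ) (c : ℝ≥0∞) (hc : c < distrib a f τ) :
    ∃ δ > (0:ℝ), c < distrib a f (τ + δ) := by
  have hset : {s ∈ Icc (0:ℝ) a | τ < ‖f s‖}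
      = ⋃ n : ℕ, {s ∈ Icc (0:ℝ) a | τ + 1/(n+1) < ‖f s‖} := by
    ext s
    simp only [mem_iUnion, mem_setOf_eq, Set.mem_sep_iff]
    constructor
    · rintro ⟨h1, h2⟩
      obtain ⟨n, hn⟩ := exists_nat_one_div_lt (sub_pos.2 h2)
      exact ⟨n, h1, by linarith⟩
    · rintro ⟨n, h1, h2⟩
      have : (0:ℝ) ≤ 1/(n+1) := by positivity
      exact ⟨h1, by linarith⟩
  have hmon : Monotone (fun n : ℕ => {s ∈ Icc (0:ℝ) a | τ + 1/(n+1) < ‖f s‖}) := by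
    intro n m hnm s hs
    have h1 : (1:ℝ)/(m+1) ≤ 1/(n+1) := by
      apply one_div_le_one_div_of_le (by positivity)
      exact_mod_cast by exact_mod_cast add_le_add_left (Nat.cast_le.2 hnm) 1
    exact ⟨hs.1, by have := hs.2; linarith⟩
  have hsup : distrib a f τ = ⨆ n : ℕ, distrib a f (τ + 1/(n+1)) := by
    unfold distrib
    rw [hset]
    exact hmon.directed_le.measure_iUnion
  rw [hsup] at hc
  obtain ⟨n, hn⟩ := lt_iSup_iff.1 hc
  exact ⟨1/(n+1), by positivity, hn⟩

lemma rearr_nonneg (a : ℝ) (f : ℝ → ℝ) (t : ℝ) : 0 ≤ rearr a f t :=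
  Real.sInf_nonneg fun _ hx => hx.1

lemma rearr_antitone (a : ℝ) (f : ℝ → ℝ) (M : ℝ) (hM0 : 0 ≤ M) (hM : distrib a f M = 0) :
    Antitone (rearr a f) := by
  intro t t' htt'
  have hne : {σ : ℝ | 0 ≤ σ ∧ distrib a f σ ≤ ENNReal.ofReal t}.Nonempty :=
    ⟨M, hM0, by simp [hM]⟩
  apply csInf_le_csInf ⟨0, fun x hx => hx.1⟩ hne
  intro σ hσ
  exact ⟨hσ.1, le_trans hσ.2 (ENNReal.ofReal_le_ofReal htt')⟩

lemma distrib_le_vol_superlevel (a : ℝ) (ha : 0 < a) (f : ℝ → ℝ) (M : ℝ)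
    (hM0 : 0 ≤ M) (hM : distrib a f M = 0) (τ : ℝ) :
    distrib a f τ ≤ volume ({t | τ < rearr a f t} ∩ Ioc 0 a) := by
  set L := distrib a f τ with hL
  have hLa : L ≤ ENNReal.ofReal a := by
    calc L ≤ volume (Icc (0:ℝ) a) := measure_mono fun s hs => hs.1
    _ = ENNReal.ofReal a := by rw [Real.volume_Icc, sub_zero]
  have hLtop : L ≠ ⊤ := (lt_of_le_of_lt hLa ENNReal.ofReal_lt_top).ne
  have hsub : Ioo 0 L.toReal ⊆ {t | τ < rearr a f t} ∩ Ioc 0 a := by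
    rintro t ⟨ht0, htL⟩
    have hta : t ≤ a := le_trans htL.le (ENNReal.toReal_le_of_le_ofReal ha.le hLa)
    have hofReal : ENNReal.ofReal t < L :=
      (ENNReal.ofReal_lt_iff_lt_toReal ht0.le hLtop).2 htL
    obtain ⟨δ, hδ0, hδ⟩ := distrib_exists_gt a f τ _ hofReal
    have hge : τ + δ ≤ rearr a f t := by
      have hne : {σ : ℝ | 0 ≤ σ ∧ distrib a f σ ≤ ENNReal.ofReal t}.Nonempty :=
        ⟨M, hM0, by simp [hM]⟩
      apply le_csInf hne
      rintro σ ⟨hσ0, hσ⟩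
      by_contra hcon
      push_neg at hcon
      have h1 : distrib a f (τ + δ) ≤ distrib a f σ := distrib_antitone a f hcon.le
      exact absurd (le_trans h1 hσ) (not_le.2 hδ)
    exact ⟨by dsimp; linarith, ht0, hta⟩
  calc L = ENNReal.ofReal L.toReal := (ENNReal.ofReal_toReal hLtop).symm
  _ = volume (Ioo 0 L.toReal) := by rw [Real.volume_Ioo, sub_zero]
  _ ≤ _ := measure_mono hsub


section St
variable (φ : ℝ → ℝ) (a : ℝ) (ha : 0 < a)
  (hmono : MonotoneOn φ (Set.Icc 0 a)) (hcont : ContinuousOn φ (Set.Icc 0 a))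

include ha hmono hcont

lemma stieltjesOfOn_apply (t : ℝ) : stieltjesOfOn φ a t = φ (clampIcc a t) := by
  unfold stieltjesOfOn
  rw [dif_pos ⟨ha.le, hmono, hcont⟩]

lemma stieltjesOfOn_apply_of_mem {t : ℝ} (ht : t ∈ Set.Icc 0 a) :
    stieltjesOfOn φ a t = φ t := by
  rw [stieltjesOfOn_apply φ a ha hmono hcont]
  congr 1
  unfold clampIcc
  rw [max_eq_left ht.1, min_eq_left ht.2]

lemma stieltjesOfOn_continuous : Continuous (stieltjesOfOn φ a) := by
  have : (⇑(stieltjesOfOn φ a) : ℝ → ℝ) = fun t => φ (clampIcc a t) :=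
    funext fun t => stieltjesOfOn_apply φ a ha hmono hcont t
  rw [this]
  exact hcont.comp_continuous (clampIcc_continuous a) (fun x => clampIcc_mem a x ha.le)

lemma stieltjesOfOn_measure_Ioo (hφ0 : φ 0 = 0) {s : ℝ} (hs : s ∈ Set.Icc 0 a) :
    (stieltjesOfOn φ a).measure (Set.Ioo 0 s) = ENNReal.ofReal (φ s) := by
  rw [StieltjesFunction.measure_Ioo]
  have hll : Function.leftLim (⇑(stieltjesOfOn φ a)) s = stieltjesOfOn φ a s := by
    apply leftLim_eq_of_tendsto
    exact ((stieltjesOfOn_continuous φ a ha hmono hcont).tendsto s).mono_left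
      nhdsWithin_le_nhds
  rw [hll, stieltjesOfOn_apply_of_mem φ a ha hmono hcont hs,
    stieltjesOfOn_apply_of_mem φ a ha hmono hcont (by constructor <;> [rfl; exact ha.le]),
    hφ0, sub_zero]

end St

lemma chord (φ : ℝ → ℝ) (a : ℝ) (ha : 0 < a) (hconc : ConcaveOn ℝ (Set.Icc 0 a) φ)
    (hφ0 : φ 0 = 0) (hφa : φ a = 1) {s : ℝ} (hs : s ∈ Set.Icc 0 a) : s / a ≤ φ s := by
  have hw1 : 0 ≤ 1 - s / a := by
    have : s / a ≤ 1 := by rw [div_le_one ha]; exact hs.2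
    linarith
  have hw2 : 0 ≤ s / a := div_nonneg hs.1 ha.le
  have hkey := hconc.2 (⟨le_rfl, ha.le⟩ : (0:ℝ) ∈ Icc 0 a) (⟨ha.le, le_rfl⟩ : a ∈ Icc (0:ℝ) a)
    hw1 hw2 (by ring)
  simp only [smul_eq_mul] at hkey
  have harg : (1 - s/a) * 0 + (s/a) * a = s := by field_simp; ring
  rw [harg, hφ0, hφa] at hkey
  linarith

lemma superlevel_bound (φ : ℝ → ℝ) (a : ℝ) (ha : 0 < a)
    (hconc : ConcaveOn ℝ (Set.Icc 0 a) φ)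
    (hmono : MonotoneOn φ (Set.Icc 0 a)) (hcont : ContinuousOn φ (Set.Icc 0 a))
    (hφ0 : φ 0 = 0) (hφa : φ a = 1) (g : ℝ → ℝ) (hg : Antitone g) (τ : ℝ) :
    (ENNReal.ofReal a)⁻¹ * volume ({t | τ < g t} ∩ Set.Ioc 0 a)
      ≤ (stieltjesOfOn φ a).measure ({t | τ < g t} ∩ Set.Ioc 0 a) := by
  set S := {t | τ < g t} ∩ Set.Ioc 0 a with hSdef
  rcases S.eq_empty_or_nonempty with hE | hNe
  · simp [hE]
  · have hbdd : BddAbove S := BddAbove.mono inter_subset_right bddAbove_Ioc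
    obtain ⟨x, hx⟩ := hNe
    set s := sSup S with hsdef
    have hxs : x ≤ s := le_csSup hbdd hx
    have hs0 : 0 < s := lt_of_lt_of_le hx.2.1 hxs
    have hsa : s ≤ a := csSup_le ⟨x, hx⟩ fun y hy => hy.2.2
    have hsub1 : Set.Ioo 0 s ⊆ S := by
      rintro t ⟨ht0, hts⟩
      obtain ⟨u, hu, htu⟩ := exists_lt_of_lt_csSup ⟨x, hx⟩ hts
      exact ⟨lt_of_lt_of_le hu.1 (hg htu.le), ht0, le_trans htu.le hu.2.2⟩
    have hsub2 : S ⊆ Set.Ioc 0 s := fun y hy => ⟨hy.2.1, le_csSup hbdd hy⟩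
    calc (ENNReal.ofReal a)⁻¹ * volume S
        ≤ (ENNReal.ofReal a)⁻¹ * volume (Set.Ioc 0 s) :=
          mul_le_mul_right (measure_mono hsub2) _
      _ = (ENNReal.ofReal a)⁻¹ * ENNReal.ofReal s := by rw [Real.volume_Ioc, sub_zero]
      _ = ENNReal.ofReal (s / a) := by
          rw [ENNReal.ofReal_div_of_pos ha, div_eq_mul_inv, mul_comm]
      _ ≤ ENNReal.ofReal (φ s) :=
          ENNReal.ofReal_le_ofReal (chord φ a ha hconc hφ0 hφa ⟨hs0.le, hsa⟩)
      _ = (stieltjesOfOn φ a).measure (Set.Ioo 0 s) :=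
          (stieltjesOfOn_measure_Ioo φ a ha hmono hcont hφ0 ⟨hs0.le, hsa⟩).symm
      _ ≤ _ := measure_mono hsub1

lemma le_eLorentzNorm (φ : ℝ → ℝ) (a : ℝ) (ha : 0 < a)
    (hconc : ConcaveOn ℝ (Set.Icc 0 a) φ)
    (hmono : MonotoneOn φ (Set.Icc 0 a)) (hcont : ContinuousOn φ (Set.Icc 0 a))
    (hφ0 : φ 0 = 0) (hφa : φ a = 1) (f : ℝ → ℝ) (hfm : Measurable f)
    (M : ℝ) (hM0 : 0 ≤ M) (hM : distrib a f M = 0) :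
    (ENNReal.ofReal a)⁻¹ * ∫⁻ s in Set.Icc (0:ℝ) a, ENNReal.ofReal ‖f s‖
      ≤ eLorentzNorm φ a f := by
  set g := rearr a f with hgdef
  have hg : Antitone g := rearr_antitone a f M hM0 hM
  have hgm : Measurable g := hg.measurable
  have hRHS : eLorentzNorm φ a f
      = ∫⁻ τ in Set.Ioi (0:ℝ),
          (stieltjesOfOn φ a).measure ({t | τ < g t} ∩ Set.Ioc 0 a) := by
    unfold eLorentzNorm
    rw [lintegral_eq_lintegral_meas_lt ((stieltjesOfOn φ a).measure.restrict (Set.Ioc 0 a))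
      (ae_of_all _ fun t => rearr_nonneg a f t) hgm.aemeasurable]
    refine lintegral_congr fun τ => ?_
    rw [Measure.restrict_apply (measurableSet_lt measurable_const hgm)]
  have hLHS : ∫⁻ s in Set.Icc (0:ℝ) a, ENNReal.ofReal ‖f s‖
      = ∫⁻ τ in Set.Ioi (0:ℝ), distrib a f τ := by
    rw [lintegral_eq_lintegral_meas_lt (volume.restrict (Set.Icc (0:ℝ) a))
      (ae_of_all _ fun s => norm_nonneg (f s)) hfm.norm.aemeasurable]
    refine lintegral_congr fun τ => ?_
    rw [Measure.restrict_apply (measurableSet_lt measurable_const hfm.norm)]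
    unfold distrib
    congr 1
    ext s
    simp only [Set.mem_inter_iff, Set.mem_setOf_eq, Set.mem_sep_iff]
    exact and_comm
  rw [hRHS, hLHS, ← lintegral_const_mul' _ _
    (ENNReal.inv_ne_top.2 (by simpa using ha))]
  refine lintegral_mono fun τ => ?_
  calc (ENNReal.ofReal a)⁻¹ * distrib a f τ
      ≤ (ENNReal.ofReal a)⁻¹ * volume ({t | τ < g t} ∩ Set.Ioc 0 a) :=
        mul_le_mul_right (distrib_le_vol_superlevel a ha f M hM0 hM τ) _
    _ ≤ _ := superlevel_bound φ a ha hconc hmono hcont hφ0 hφa g hg τ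

/-- The set `E₊ = {t ∈ [0,a] : h t > 0}`. -/
def posSet (a : ℝ) (h : ℝ → ℝ) : Set ℝ := {t ∈ Set.Icc (0:ℝ) a | 0 < h t}

/-- The set `E₋ = {t ∈ [0,a] : h t < 0}`. -/
def negSet (a : ℝ) (h : ℝ → ℝ) : Set ℝ := {t ∈ Set.Icc (0:ℝ) a | h t < 0}

/-- Let `φ` be a nonlinear, strictly increasing, concave, continuous
function on `[0,a]` with `φ 0 = 0`, `φ a = 1`.  If `h` is measurable, `|h| ≤ 1` a.e.,
`h` is not a.e. zero, and `‖1 + h‖_{Λ(φ)} = ‖1 − h‖_{Λ(φ)} = 1`, then both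
`{h > 0}` and `{h < 0}` have measure strictly between `0` and `a`. -/
theorem pos_neg_sets_nondegenerate (a : ℝ) (ha : 0 < a) (φ : ℝ → ℝ)
    (hconc : ConcaveOn ℝ (Set.Icc 0 a) φ)
    (hcont : ContinuousOn φ (Set.Icc 0 a))
    (hmono : StrictMonoOn φ (Set.Icc 0 a))
    (hφ0 : φ 0 = 0) (hφa : φ a = 1)
    (hnonlin : ¬ ∀ t ∈ Set.Icc (0:ℝ) a, φ t = t / a)
    (h : ℝ → ℝ) (hm : Measurable h)
    (hb : ∀ᵐ t ∂(volume.restrict (Set.Icc (0:ℝ) a)), |h t| ≤ 1)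
    (hne : ¬ (h =ᵐ[volume.restrict (Set.Icc (0:ℝ) a)] 0))
    (hplus : eLorentzNorm φ a (fun t => 1 + h t) = 1)
    (hminus : eLorentzNorm φ a (fun t => 1 - h t) = 1) :
    (0 < volume (posSet a h) ∧ volume (posSet a h) < ENNReal.ofReal a) ∧
    (0 < volume (negSet a h) ∧ volume (negSet a h) < ENNReal.ofReal a) := by
  classical
  have hmono' : MonotoneOn φ (Set.Icc 0 a) := hmono.monotoneOn
  set ν := volume.restrict (Set.Icc (0:ℝ) a) with hν
  haveI : IsFiniteMeasure ν := ⟨by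
    rw [hν, Measure.restrict_apply_univ, Real.volume_Icc]
    exact ENNReal.ofReal_lt_top⟩
  have hbnull : ν {t | ¬ |h t| ≤ 1} = 0 := by
    rw [← ae_iff]
    exact hb
  have hdist : ∀ (f : ℝ → ℝ), (∀ t, |f t| ≤ 1 + |h t|) → distrib a f 2 = 0 := by
    intro f hfb
    unfold distrib
    have hsubset : {s ∈ Set.Icc (0:ℝ) a | 2 < ‖f s‖}
        ⊆ {t | ¬ |h t| ≤ 1} ∩ Set.Icc (0:ℝ) a := by
      rintro s ⟨hs1, hs2⟩
      refine ⟨fun hc => ?_, hs1⟩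
      have h1 := hfb s
      rw [Real.norm_eq_abs] at hs2
      linarith
    apply measure_mono_null hsubset
    rw [← Measure.restrict_apply' measurableSet_Icc]
    exact hbnull
  have hkey : ∀ (f : ℝ → ℝ), Measurable f → distrib a f 2 = 0 → eLorentzNorm φ a f = 1 →
      (∫⁻ s in Set.Icc (0:ℝ) a, ENNReal.ofReal ‖f s‖) ≤ ENNReal.ofReal a := by
    intro f hfm hd hnorm
    have h1 := le_eLorentzNorm φ a ha hconc hmono' hcont hφ0 hφa f hfm 2 (by norm_num) hd
    rw [hnorm] at h1
    have ha0 : ENNReal.ofReal a ≠ 0 := by simpa using ha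
    have h2 := mul_le_mul_right h1 (ENNReal.ofReal a)
    rwa [← mul_assoc, ENNReal.mul_inv_cancel ha0 ENNReal.ofReal_ne_top, one_mul, mul_one] at h2
  have hInth : Integrable h ν := by
    refine Integrable.mono' (integrable_const 1) hm.aestronglyMeasurable ?_
    exact hb.mono fun t ht => by rwa [Real.norm_eq_abs]
  have hbound : ∀ (f : ℝ → ℝ), Measurable f → (∀ᵐ t ∂ν, 0 ≤ f t) →
      ((∫⁻ s in Set.Icc (0:ℝ) a, ENNReal.ofReal ‖f s‖) ≤ ENNReal.ofReal a) →
      ∫ t, f t ∂ν ≤ a := by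
    intro f hfm hfnn hle
    rw [integral_eq_lintegral_of_nonneg_ae hfnn hfm.aestronglyMeasurable]
    refine ENNReal.toReal_le_of_le_ofReal ha.le ?_
    refine le_trans (lintegral_mono fun t => ?_) hle
    exact ENNReal.ofReal_le_ofReal (le_abs_self _)
  have hνuniv : (ν Set.univ).toReal = a := by
    rw [hν, Measure.restrict_apply_univ, Real.volume_Icc, sub_zero,
      ENNReal.toReal_ofReal ha.le]
  have hsplitP : ∫ t, (1 + h t) ∂ν = a + ∫ t, h t ∂ν := by
    rw [integral_add (integrable_const 1) hInth, integral_const, smul_eq_mul, mul_one, measureReal_def, hνuniv]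
  have hsplitM : ∫ t, (1 - h t) ∂ν = a - ∫ t, h t ∂ν := by
    rw [integral_sub (integrable_const 1) hInth, integral_const, smul_eq_mul, mul_one, measureReal_def, hνuniv]
  have hplus' : ∫ t, (1 + h t) ∂ν ≤ a := by
    refine hbound _ (measurable_const.add hm) (hb.mono fun t ht => ?_)
      (hkey _ (measurable_const.add hm) (hdist _ fun t => ?_) hplus)
    · rcases abs_le.1 ht with ⟨h1, _⟩; linarith
    · simpa using abs_add_le 1 (h t)
  have hminus' : ∫ t, (1 - h t) ∂ν ≤ a := by
    refine hbound _ (measurable_const.sub hm) (hb.mono fun t ht => ?_)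
      (hkey _ (measurable_const.sub hm) (hdist _ fun t => ?_) hminus)
    · rcases abs_le.1 ht with ⟨_, h2⟩; linarith
    · simpa using abs_sub 1 (h t)
  have hint0 : ∫ t, h t ∂ν = 0 := by
    rw [hsplitP] at hplus'
    rw [hsplitM] at hminus'
    linarith
  have hposmeas : MeasurableSet {t : ℝ | 0 < h t} := measurableSet_lt measurable_const hm
  have hnegmeas : MeasurableSet {t : ℝ | h t < 0} := measurableSet_lt hm measurable_const
  have hvolpos : volume (posSet a h) = ν {t | 0 < h t} := by
    rw [hν, Measure.restrict_apply hposmeas]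
    congr 1
    ext t
    simp only [posSet, Set.mem_inter_iff, Set.mem_setOf_eq, Set.mem_sep_iff]
    exact and_comm
  have hvolneg : volume (negSet a h) = ν {t | h t < 0} := by
    rw [hν, Measure.restrict_apply hnegmeas]
    congr 1
    ext t
    simp only [negSet, Set.mem_inter_iff, Set.mem_setOf_eq, Set.mem_sep_iff]
    exact and_comm
  have hpos0 : 0 < volume (posSet a h) := by
    rw [hvolpos]
    rcases eq_or_lt_of_le (zero_le : 0 ≤ ν {t | 0 < h t}) with h0 | h0
    · exfalso
      have hle : ∀ᵐ t ∂ν, h t ≤ 0 := by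
        rw [ae_iff]
        convert h0.symm using 2
        ext t
        simp
      have hnn : 0 ≤ᵐ[ν] (fun t => -h t) := hle.mono fun t ht => by simpa using ht
      have hz : (fun t => -h t) =ᵐ[ν] 0 := by
        rw [← integral_eq_zero_iff_of_nonneg_ae hnn hInth.neg, integral_neg, hint0, neg_zero]
      exact hne (hz.mono fun t ht => by simpa using ht)
    · exact h0
  have hneg0 : 0 < volume (negSet a h) := by
    rw [hvolneg]
    rcases eq_or_lt_of_le (zero_le : 0 ≤ ν {t | h t < 0}) with h0 | h0
    · exfalso
      have hle : ∀ᵐ t ∂ν, 0 ≤ h t := by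
        rw [ae_iff]
        convert h0.symm using 2
        ext t
        simp
      have hz : h =ᵐ[ν] 0 := by
        rw [← integral_eq_zero_iff_of_nonneg_ae hle hInth, hint0]
      exact hne hz
    · exact h0
  have hdisj : Disjoint (posSet a h) (negSet a h) := by
    rw [Set.disjoint_left]
    rintro t ⟨_, h1⟩ ⟨_, h2⟩
    exact absurd (h1.trans h2) (lt_irrefl 0)
  have hmsNeg : MeasurableSet (negSet a h) := by
    have : negSet a h = Set.Icc (0:ℝ) a ∩ {t | h t < 0} := rfl
    rw [this]
    exact measurableSet_Icc.inter hnegmeas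
  have hsum : volume (posSet a h) + volume (negSet a h) ≤ ENNReal.ofReal a := by
    rw [← measure_union hdisj hmsNeg]
    calc volume (posSet a h ∪ negSet a h) ≤ volume (Set.Icc (0:ℝ) a) :=
          measure_mono (by rintro t (ht | ht) <;> exact ht.1)
      _ = ENNReal.ofReal a := by rw [Real.volume_Icc, sub_zero]
  have hpostop : volume (posSet a h) ≠ ⊤ :=
    (lt_of_le_of_lt (le_trans le_self_add hsum) ENNReal.ofReal_lt_top).ne
  have hnegtop : volume (negSet a h) ≠ ⊤ :=
    (lt_of_le_of_lt (le_trans le_add_self hsum) ENNReal.ofReal_lt_top).ne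
  refine ⟨⟨hpos0, ?_⟩, hneg0, ?_⟩
  · exact lt_of_lt_of_le (ENNReal.lt_add_right hpostop hneg0.ne') hsum
  · refine lt_of_lt_of_le (ENNReal.lt_add_right hnegtop hpos0.ne') ?_
    rw [add_comm]
    exact hsum


end
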